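/- Let c be the derivation of the free Lie algebra lie_n determined by c(x_i) = ⁅x_i, x_1 + ⋯ + x_n⁆ for all i (the inner derivation a ↦ ⁅a, x_1 + ⋯ + x_n⁆, equal to the sum Σ_{i<j} t^{i,j}). Then c commutes with every special derivation: for every derivation u of lie_n such that u(x_i) = ⁅x_i, a_i⁆ for some elements a_i ∈ lie_n (u is tangential) and u(x_1 + ⋯ + x_n) = 0 (u is special), one has ⁅c, u⁆ = 0. -/

import Mathlib

open FreeLieAlgebra

lemma freeLie_lieSpan_top (k : Type) [Field k] (n : ℕ) :
    LieSubalgebra.lieSpan k (FreeLieAlgebra k (Fin n)) (Set.range (of k)) = ⊤ := by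
  set S := LieSubalgebra.lieSpan k (FreeLieAlgebra k (Fin n)) (Set.range (of k))
  have h : ∀ i : Fin n, of k i ∈ S :=
    fun i => LieSubalgebra.subset_lieSpan ⟨i, rfl⟩
  let f : Fin n → S := fun i => ⟨of k i, h i⟩
  have key : S.incl.comp (lift k f) = LieHom.id := by
    apply hom_ext
    intro x
    simp [f, lift_of_apply]
  rw [eq_top_iff]
  intro x _
  have h2 : S.incl (lift k f x) = x := by
    have := congrArg (fun F => F x) key
    simpa using this
  rw [← h2]
  exact (lift k f x).2

theorem central_element_commutes_with_special (k : Type) [Field k] [CharZero k] (n : ℕ)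
    (c u : LieDerivation k (FreeLieAlgebra k (Fin n)) (FreeLieAlgebra k (Fin n)))
    (hc : ∀ i, c (of k i) = ⁅of k i, ∑ j : Fin n, of k j⁆)
    (a : Fin n → FreeLieAlgebra k (Fin n))
    (hu : ∀ i, u (of k i) = ⁅of k i, a i⁆)
    (hspecial : u (∑ i : Fin n, of k i) = 0) :
    ⁅c, u⁆ = 0 := by
  set L := FreeLieAlgebra k (Fin n)
  set Sum : L := ∑ j : Fin n, of k j with hSum
  -- c equals the inner derivation x ↦ ⁅x, Sum⁆
  have hcinner : c = LieDerivation.inner k L L Sum := by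
    apply LieDerivation.ext_of_lieSpan_eq_top _ (freeLie_lieSpan_top k n)
    rintro _ ⟨i, rfl⟩
    simp [hc i, LieDerivation.inner]
    rfl
  have hc' : ∀ x : L, c x = ⁅x, Sum⁆ := by
    intro x; rw [hcinner]; simp [LieDerivation.inner]
    rfl
  apply LieDerivation.ext_of_lieSpan_eq_top _ (freeLie_lieSpan_top k n)
  rintro _ ⟨i, rfl⟩
  have : (⁅c, u⁆ : LieDerivation k L L) (of k i) = c (u (of k i)) - u (c (of k i)) := by
    simp
  rw [this, hc i, hc' (u (of k i)), LieDerivation.apply_lie_eq_add, hspecial]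
  simp
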